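/- Let {α_j} be positive reals with α_j ≤ c_1, s_{-1} = 0 and s_n = Σ_{j=0}^n 1/α_j. For p, q ≥ 0 with max{p,q} = 1 there is a constant C_0 = C_0(c_1, p, q) such that Σ_{j=0}^n (1/α_j)(s_n - s_{j-1})^{-p} s_j^{-q} ≤ C_0 s_n^{1-p-q} log(1 + s_n) for all n ≥ 0. -/

import Mathlib

open Finset

lemma log_step' {a b : ℝ} (ha : 0 < a) (hab : a ≤ b) :
    (b - a) / b ≤ Real.log b - Real.log a := by
  have hb : 0 < b := lt_of_lt_of_le ha hab
  have h1 : Real.log (a / b) ≤ a / b - 1 := Real.log_le_sub_one_of_pos (by positivity)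
  have h2 : Real.log (a / b) = Real.log a - Real.log b :=
    Real.log_div (ne_of_gt ha) (ne_of_gt hb)
  have h3 : (b - a) / b = 1 - a / b := by field_simp
  linarith

lemma telescope' (c : ℕ → ℝ) (hc : ∀ i, 0 < c i) (n : ℕ) :
    ∑ j ∈ Finset.range (n+1), c j / (∑ i ∈ Finset.range (j+1), c i)
      ≤ 1 + Real.log (∑ i ∈ Finset.range (n+1), c i) - Real.log (c 0) := by
  induction n with
  | zero => simp [div_self (ne_of_gt (hc 0))]
  | succ m ih =>
    rw [Finset.sum_range_succ]
    have hTm : 0 < ∑ i ∈ Finset.range (m+1), c i :=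
      Finset.sum_pos (fun i _ => hc i) (by simp)
    have hle : (∑ i ∈ Finset.range (m+1), c i) ≤ ∑ i ∈ Finset.range (m+1+1), c i := by
      have e := Finset.sum_range_succ c (m+1)
      have := hc (m+1)
      linarith
    have step := log_step' hTm hle
    have heq : c (m+1) / ∑ i ∈ Finset.range (m+1+1), c i
        = ((∑ i ∈ Finset.range (m+1+1), c i) - ∑ i ∈ Finset.range (m+1), c i)
          / ∑ i ∈ Finset.range (m+1+1), c i := by
      have e := Finset.sum_range_succ c (m+1)
      rw [e]; ring_nf
    rw [heq]
    linarith

lemma partial_reflect' (c : ℕ → ℝ) (n : ℕ) : ∀ j, j ≤ n →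
    ∑ i ∈ Finset.range (j+1), c (n - i)
      = ∑ i ∈ Finset.range (n+1), c i - ∑ i ∈ Finset.range (n - j), c i := by
  intro j hj
  induction j with
  | zero =>
    simp [Finset.sum_range_succ]
  | succ k ih =>
    have hk : k ≤ n := by omega
    have e1 : ∑ i ∈ Finset.range (k+1+1), c (n - i)
        = (∑ i ∈ Finset.range (k+1), c (n - i)) + c (n - (k+1)) :=
      Finset.sum_range_succ _ _
    have e2 : ∑ i ∈ Finset.range (n - k), c i
        = (∑ i ∈ Finset.range (n - (k+1)), c i) + c (n - (k+1)) := by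
      have h1 : n - k = (n - (k+1)) + 1 := by omega
      rw [h1, Finset.sum_range_succ]
    rw [e1, ih hk, e2]
    ring

lemma telescope2' (c : ℕ → ℝ) (hc : ∀ i, 0 < c i) (n : ℕ) :
    ∑ j ∈ Finset.range (n+1), c j / ((∑ i ∈ Finset.range (n+1), c i) - ∑ i ∈ Finset.range j, c i)
      ≤ 1 + Real.log (∑ i ∈ Finset.range (n+1), c i) - Real.log (c n) := by
  have hrefl : ∑ j ∈ Finset.range (n+1),
      c j / ((∑ i ∈ Finset.range (n+1), c i) - ∑ i ∈ Finset.range j, c i)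
      = ∑ j ∈ Finset.range (n+1), c (n - j) / (∑ i ∈ Finset.range (j+1), c (n - i)) := by
    rw [← Finset.sum_range_reflect
      (fun j => c j / ((∑ i ∈ Finset.range (n+1), c i) - ∑ i ∈ Finset.range j, c i)) (n+1)]
    apply Finset.sum_congr rfl
    intro j hj
    have hj' : j ≤ n := by simpa [Nat.lt_succ_iff] using hj
    simp only [Nat.add_sub_cancel]
    rw [partial_reflect' c n j hj']
  rw [hrefl]
  have htot : ∑ i ∈ Finset.range (n+1), c (n - i) = ∑ i ∈ Finset.range (n+1), c i := by
    rw [← Finset.sum_range_reflect (fun i => c i) (n+1)]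
    simp
  have := telescope' (fun i => c (n - i)) (fun i => hc _) n
  rw [htot] at this
  simpa using this

theorem stmt_6 (c1 p q : ℝ) (hc1 : 0 < c1) (hp : 0 ≤ p) (hq : 0 ≤ q)
    (hpq : max p q = 1) :
    ∃ C0 : ℝ, 0 < C0 ∧ ∀ (α : ℕ → ℝ), (∀ j, 0 < α j) → (∀ j, α j ≤ c1) →
      ∀ n : ℕ,
        ∑ j ∈ Finset.range (n + 1),
            (1 / α j) *
              ((∑ i ∈ Finset.range (n + 1), 1 / α i) -
                  ∑ i ∈ Finset.range j, 1 / α i) ^ (-p) *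
              (∑ i ∈ Finset.range (j + 1), 1 / α i) ^ (-q) ≤
          C0 * (∑ i ∈ Finset.range (n + 1), 1 / α i) ^ (1 - p - q) *
            Real.log (1 + ∑ i ∈ Finset.range (n + 1), 1 / α i) := by
  have hp1 : p ≤ 1 := hpq ▸ le_max_left p q
  have hq1 : q ≤ 1 := hpq ▸ le_max_right p q
  set L : ℝ := Real.log (1 + 1/c1) with hL
  have hLpos : 0 < L := Real.log_pos (by
    have h : 0 < 1/c1 := by positivity
    linarith)
  set K : ℝ := 2 + 2 * max (Real.log c1) 0 with hK
  have hKnn : 0 ≤ K := by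
    have : (0:ℝ) ≤ max (Real.log c1) 0 := le_max_right _ _
    simp only [hK]; linarith
  refine ⟨K / L + 2, by have := div_nonneg hKnn hLpos.le; linarith, ?_⟩
  intro α hα hαc n
  set δ : ℕ → ℝ := fun j => 1 / α j with hδ
  have hδpos : ∀ j, 0 < δ j := fun j => one_div_pos.mpr (hα j)
  set s : ℝ := ∑ i ∈ Finset.range (n+1), δ i with hs
  have hspos : 0 < s := Finset.sum_pos (fun i _ => hδpos i) (by simp)
  have hs0 : δ 0 ≤ s := Finset.single_le_sum (fun i _ => (hδpos i).le) (by simp)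
  have hc1s : 1/c1 ≤ s := le_trans (by
    simp only [hδ]
    exact one_div_le_one_div_of_le (hα 0) (hαc 0)) hs0
  -- pointwise bound
  have key : ∀ j ∈ Finset.range (n+1),
      δ j * (s - ∑ i ∈ Finset.range j, δ i) ^ (-p) *
        (∑ i ∈ Finset.range (j+1), δ i) ^ (-q)
      ≤ s ^ (1-p-q) * (δ j / (∑ i ∈ Finset.range (j+1), δ i)
          + δ j / (s - ∑ i ∈ Finset.range j, δ i)) := by
    intro j hj
    have hjn : j ≤ n := by simpa [Nat.lt_succ_iff] using hj
    set x : ℝ := ∑ i ∈ Finset.range (j+1), δ i with hx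
    set y : ℝ := s - ∑ i ∈ Finset.range j, δ i with hy
    have hxpos : 0 < x := Finset.sum_pos (fun i _ => hδpos i) (by simp)
    have hxs : x ≤ s := by
      apply Finset.sum_le_sum_of_subset_of_nonneg
      · exact Finset.range_subset_range.mpr (by omega)
      · exact fun i _ _ => (hδpos i).le
    have hsub : (∑ i ∈ Finset.range j, δ i) + δ j ≤ s := by
      have e := Finset.sum_range_succ δ j
      have : (∑ i ∈ Finset.range (j+1), δ i) ≤ s := hxs
      linarith [e ▸ this]
    have hypos : 0 < y := by have := hδpos j; simp only [hy]; linarith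
    have hys : y ≤ s := by
      have : 0 ≤ ∑ i ∈ Finset.range j, δ i :=
        Finset.sum_nonneg (fun i _ => (hδpos i).le)
      simp only [hy]; linarith
    have hxy : s ≤ x + y := by
      have e := Finset.sum_range_succ δ j
      have := hδpos j
      simp only [hx, hy, e]; linarith
    clear_value x y
    have e1 : y ^ (-p) = y ^ (1-p) / y := by
      rw [eq_div_iff (ne_of_gt hypos), show (1-p) = -p + 1 by ring,
        Real.rpow_add_one (ne_of_gt hypos)]
    have e2 : x ^ (-q) = x ^ (1-q) / x := by
      rw [eq_div_iff (ne_of_gt hxpos), show (1-q) = -q + 1 by ring,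
        Real.rpow_add_one (ne_of_gt hxpos)]
    have b1 : y ^ (1-p) ≤ s ^ (1-p) := Real.rpow_le_rpow hypos.le hys (by linarith)
    have b2 : x ^ (1-q) ≤ s ^ (1-q) := Real.rpow_le_rpow hxpos.le hxs (by linarith)
    have step1 : δ j * y ^ (-p) * x ^ (-q)
        ≤ δ j * (s ^ (1-p) / y) * (s ^ (1-q) / x) := by
      rw [e1, e2]
      have hδj := (hδpos j).le
      gcongr
    refine step1.trans ?_
    have e4 : s ^ (1-p) * s ^ (1-q) = s * s ^ (1-p-q) := by
      rw [← Real.rpow_add hspos]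
      rw [show (1-p)+(1-q) = 1 + (1-p-q) by ring, Real.rpow_add hspos, Real.rpow_one]
    have e3 : δ j * (s ^ (1-p) / y) * (s ^ (1-q) / x)
        = s ^ (1-p-q) * (δ j * (s / (x * y))) := by
      have e5 : δ j * (s ^ (1-p) / y) * (s ^ (1-q) / x)
          = (s ^ (1-p) * s ^ (1-q)) * (δ j / (x*y)) := by ring
      rw [e5, e4]; ring
    rw [e3]
    have h6 : s / (x*y) ≤ 1/x + 1/y := by
      rw [div_add_div _ _ (ne_of_gt hxpos) (ne_of_gt hypos), one_mul, mul_one]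
      apply div_le_div_of_nonneg_right ?_ (by positivity)
      linarith
    have h7 : δ j * (s / (x * y)) ≤ δ j / x + δ j / y := by
      calc δ j * (s / (x*y)) ≤ δ j * (1/x + 1/y) :=
            mul_le_mul_of_nonneg_left h6 (hδpos j).le
        _ = δ j / x + δ j / y := by ring
    exact mul_le_mul_of_nonneg_left h7 (Real.rpow_nonneg hspos.le _)
  -- telescoping bounds
  have hH1 : ∑ j ∈ Finset.range (n+1), δ j / (∑ i ∈ Finset.range (j+1), δ i)
      ≤ 1 + Real.log s - Real.log (δ 0) := by
    have := telescope' δ hδpos n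
    rw [← hs] at this
    exact this
  have hH2 : ∑ j ∈ Finset.range (n+1), δ j / (s - ∑ i ∈ Finset.range j, δ i)
      ≤ 1 + Real.log s - Real.log (δ n) := by
    have := telescope2' δ hδpos n
    rw [← hs] at this
    exact this
  have hlogbound : ∀ m : ℕ, -(max (Real.log c1) 0) ≤ Real.log (δ m) := by
    intro m
    have h1 : Real.log (δ m) = -Real.log (α m) := by
      have : δ m = (α m)⁻¹ := by rw [hδ]; simp [one_div]
      rw [this, Real.log_inv]
    have h2 : Real.log (α m) ≤ Real.log c1 := Real.log_le_log (hα m) (hαc m)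
    have h3 : Real.log c1 ≤ max (Real.log c1) 0 := le_max_left _ _
    rw [h1]; linarith
  have hlogs : Real.log s ≤ Real.log (1 + s) := Real.log_le_log hspos (by linarith)
  have hLlog : L ≤ Real.log (1 + s) := by
    rw [hL]
    apply Real.log_le_log (by positivity)
    linarith
  have hsum : K + 2 * Real.log s ≤ (K/L + 2) * Real.log (1+s) := by
    have h7 : K = (K/L) * L := by field_simp
    have h8 : (K/L) * L ≤ (K/L) * Real.log (1+s) :=
      mul_le_mul_of_nonneg_left hLlog (div_nonneg hKnn hLpos.le)
    have h9 : (K/L + 2) * Real.log (1+s)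
        = (K/L) * Real.log (1+s) + 2 * Real.log (1+s) := by ring
    linarith
  have hAnn : (0:ℝ) ≤ s ^ (1-p-q) := Real.rpow_nonneg hspos.le _
  calc ∑ j ∈ Finset.range (n + 1),
        (1 / α j) *
          ((∑ i ∈ Finset.range (n + 1), 1 / α i) -
              ∑ i ∈ Finset.range j, 1 / α i) ^ (-p) *
          (∑ i ∈ Finset.range (j + 1), 1 / α i) ^ (-q)
      = ∑ j ∈ Finset.range (n+1),
          δ j * (s - ∑ i ∈ Finset.range j, δ i) ^ (-p) *
            (∑ i ∈ Finset.range (j+1), δ i) ^ (-q) := rfl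
    _ ≤ ∑ j ∈ Finset.range (n+1),
          s ^ (1-p-q) * (δ j / (∑ i ∈ Finset.range (j+1), δ i)
            + δ j / (s - ∑ i ∈ Finset.range j, δ i)) := Finset.sum_le_sum key
    _ = s ^ (1-p-q) * ((∑ j ∈ Finset.range (n+1), δ j / (∑ i ∈ Finset.range (j+1), δ i))
          + ∑ j ∈ Finset.range (n+1), δ j / (s - ∑ i ∈ Finset.range j, δ i)) := by
        rw [← Finset.mul_sum, Finset.sum_add_distrib]
    _ ≤ s ^ (1-p-q) * (K + 2 * Real.log s) := by
        apply mul_le_mul_of_nonneg_left ?_ hAnn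
        have := hlogbound 0
        have := hlogbound n
        simp only [hK]
        linarith
    _ ≤ s ^ (1-p-q) * ((K/L + 2) * Real.log (1+s)) :=
        mul_le_mul_of_nonneg_left hsum hAnn
    _ = (K/L + 2) * s ^ (1-p-q) * Real.log (1+s) := by ring
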